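/- Let μ be a Borel probability measure on [0,1]^d with cumulative distribution function H such that H(1,…,1,x,1,…,1) = x for every x ∈ [0,1] and every coordinate position (uniform margins). Let w = (w₁,…,w_d) ∈ (0,1]^d satisfy w₁ + ⋯ + w_d = 1, and suppose there is a real number a > 0 such that H(x^{w₁},…,x^{w_d}) = x^a for all x ∈ (0,1). Set ν := ∫_{[0,1]^d} ν_w(u) dμ(u). Then ν + c(w) < 1 and a = (ν + c(w)) / (1 − ν − c(w)). -/

import Mathlib

open MeasureTheory Finset

/-- The multivariate `w`-madogram integrand
`ν_w(u) = max_i uᵢ^(1/wᵢ) − (1/d) Σᵢ uᵢ^(1/wᵢ)`. -/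
noncomputable def nuW (d : ℕ) (hd : 0 < d) (w u : Fin d → ℝ) : ℝ :=
  (Finset.univ.sup' (Finset.univ_nonempty_iff.mpr (Fin.pos_iff_nonempty.mp hd))
      fun i => u i ^ (1 / w i)) -
    (1 / (d : ℝ)) * ∑ i, u i ^ (1 / w i)

/-- Cumulative distribution function of a measure on `[0,1]^d ⊆ ℝ^d`. -/
noncomputable def cdf {d : ℕ} (μ : Measure (Fin d → ℝ)) (u : Fin d → ℝ) : ℝ :=
  (μ {v | ∀ i, v i ≤ u i}).toReal

/-- If two sets agree inside a co-null set, they have the same measure. -/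
lemma measure_eq_of_inter_eq {α : Type*} [MeasurableSpace α] (μ : Measure α)
    {S A B : Set α} (hS : μ Sᶜ = 0) (h : A ∩ S = B ∩ S) : μ A = μ B := by
  rw [← measure_inter_conull (s := A) hS, ← measure_inter_conull (s := B) hS, h]

/-- A measurable function with values in `[0,1]` on a co-null set is integrable w.r.t. a
probability measure. -/
lemma integrable_of_bounded01 {α : Type*} [MeasurableSpace α] (μ : Measure α)
    [IsProbabilityMeasure μ] {S : Set α} (hS : μ Sᶜ = 0) {g : α → ℝ} (hg : Measurable g)
    (h01 : ∀ u ∈ S, g u ∈ Set.Icc (0:ℝ) 1) : Integrable g μ := by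
  have hae : ∀ᵐ u ∂μ, u ∈ S := ae_iff.mpr hS
  refine (integrable_const (1:ℝ)).mono' hg.aestronglyMeasurable ?_
  filter_upwards [hae] with u hu
  have h := h01 u hu
  rw [Real.norm_eq_abs, abs_le]
  exact ⟨by linarith [h.1], h.2⟩

/-- Layer-cake computation: if `g` takes values in `[0,1]` a.e. and
`μ {g ≤ t} = t ^ b` for `t ∈ (0,1)`, then `∫ g = b / (1 + b)`. -/
lemma integral_eq_of_cdf_rpow {α : Type*} [MeasurableSpace α] (μ : Measure α)
    [IsProbabilityMeasure μ] {S : Set α} (hS : μ Sᶜ = 0) {g : α → ℝ} (hg : Measurable g)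
    (h01 : ∀ u ∈ S, g u ∈ Set.Icc (0:ℝ) 1) {b : ℝ} (hb : 0 < b)
    (hcdf : ∀ t ∈ Set.Ioo (0:ℝ) 1, (μ {u | g u ≤ t}).toReal = t ^ b) :
    ∫ u, g u ∂μ = b / (1 + b) := by
  have hae : ∀ᵐ u ∂μ, u ∈ S := ae_iff.mpr hS
  have hint : Integrable g μ := integrable_of_bounded01 μ hS hg h01
  have hnn : 0 ≤ᵐ[μ] g := by filter_upwards [hae] with u hu; exact (h01 u hu).1
  rw [hint.integral_eq_integral_meas_lt hnn]
  have hzero : ∀ t ∈ Set.Ici (1:ℝ), (μ {u | t < g u}).toReal = 0 := by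
    intro t ht
    have hsub : {u | t < g u} ⊆ Sᶜ := by
      intro u hu hus
      exact absurd ((h01 u hus).2.trans ht) (not_le.mpr hu)
    rw [measure_mono_null hsub hS]
    simp
  have heq : ∀ t ∈ Set.Ioo (0:ℝ) 1, (μ {u | t < g u}).toReal = 1 - t ^ b := by
    intro t ht
    have hms : MeasurableSet {u | g u ≤ t} := measurableSet_le hg measurable_const
    have hcompl : {u | t < g u} = {u | g u ≤ t}ᶜ := by
      ext u; simp [not_le]
    rw [hcompl, prob_compl_eq_one_sub hms,
      ENNReal.toReal_sub_of_le prob_le_one ENNReal.one_ne_top, ENNReal.toReal_one, hcdf t ht]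
  have hb1 : (-1:ℝ) < b := by linarith
  have hIoo : IntegrableOn (fun t : ℝ => 1 - t ^ b) (Set.Ioo 0 1) := by
    have h1 : IntervalIntegrable (fun t : ℝ => t ^ b) volume 0 1 :=
      intervalIntegral.intervalIntegrable_rpow' hb1
    have h2 : IntegrableOn (fun t : ℝ => t ^ b) (Set.Ioc 0 1) := h1.1
    exact ((integrableOn_const_iff (C := (1:ℝ))).mpr (Or.inr measure_Ioo_lt_top)).sub
      (h2.mono_set Set.Ioo_subset_Ioc_self)
  have hsplit : Set.Ioi (0:ℝ) = Set.Ioo 0 1 ∪ Set.Ici 1 :=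
    (Set.Ioo_union_Ici_eq_Ioi one_pos).symm
  have hdisj : Disjoint (Set.Ioo (0:ℝ) 1) (Set.Ici 1) := by
    rw [Set.disjoint_left]
    rintro x ⟨_, hx1⟩ hx2
    exact absurd hx2 (not_le.mpr hx1)
  simp only [measureReal_def]
  rw [hsplit, setIntegral_union hdisj measurableSet_Ici
      (hIoo.congr_fun (fun t ht => (heq t ht).symm) measurableSet_Ioo)
      ((integrableOn_zero).congr_fun (fun t ht => (hzero t ht).symm) measurableSet_Ici)]
  rw [setIntegral_congr_fun measurableSet_Ici hzero, integral_zero, add_zero]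
  rw [setIntegral_congr_fun measurableSet_Ioo heq]
  rw [← integral_Ioc_eq_integral_Ioo, ← intervalIntegral.integral_of_le zero_le_one]
  rw [intervalIntegral.integral_sub intervalIntegrable_const
      (intervalIntegral.intervalIntegrable_rpow' hb1)]
  rw [intervalIntegral.integral_const, integral_rpow (Or.inl hb1)]
  have hb0' : b + 1 ≠ 0 := by positivity
  rw [Real.one_rpow, Real.zero_rpow hb0', smul_eq_mul]
  rw [sub_zero, one_mul, add_comm (1:ℝ) b, eq_div_iff hb0', sub_mul, one_mul,
    div_mul_cancel₀ 1 hb0']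
  ring

theorem pickands_from_madogram (d : ℕ) (hd : 2 ≤ d)
    (μ : Measure (Fin d → ℝ)) [IsProbabilityMeasure μ]
    (hμ : μ (Set.univ.pi fun _ : Fin d => Set.Icc (0:ℝ) 1)ᶜ = 0)
    (hmarg : ∀ i : Fin d, ∀ x ∈ Set.Icc (0:ℝ) 1,
      cdf μ (Function.update (fun _ => (1:ℝ)) i x) = x)
    (w : Fin d → ℝ) (hw : ∀ i, 0 < w i ∧ w i ≤ 1) (hwsum : ∑ i, w i = 1)
    (a : ℝ) (ha : 0 < a)
    (hdiag : ∀ x ∈ Set.Ioo (0:ℝ) 1, cdf μ (fun i => x ^ w i) = x ^ a)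
    (ν : ℝ) (hν : ν = ∫ u, nuW d (by omega) w u ∂μ) :
    ν + (1 / (d : ℝ)) * (∑ i, w i / (1 + w i)) < 1 ∧
      a = (ν + (1 / (d : ℝ)) * ∑ i, w i / (1 + w i)) /
        (1 - ν - (1 / (d : ℝ)) * ∑ i, w i / (1 + w i)) := by
  have hd0 : 0 < d := by omega
  set S : Set (Fin d → ℝ) := Set.univ.pi fun _ : Fin d => Set.Icc (0:ℝ) 1 with hSdef
  have hmemS : ∀ u : Fin d → ℝ, u ∈ S ↔ ∀ i, u i ∈ Set.Icc (0:ℝ) 1 := by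
    intro u; simp [hSdef, Set.mem_pi, Pi.le_def, forall_and]
  have hne : (Finset.univ : Finset (Fin d)).Nonempty :=
    Finset.univ_nonempty_iff.mpr (Fin.pos_iff_nonempty.mp hd0)
  -- the coordinate powers
  set f : Fin d → (Fin d → ℝ) → ℝ := fun i u => u i ^ (1 / w i) with hfdef
  have hfmeas : ∀ i, Measurable (f i) := by
    intro i; simp only [hfdef]; fun_prop
  have hf01 : ∀ i, ∀ u ∈ S, f i u ∈ Set.Icc (0:ℝ) 1 := by
    intro i u hu
    have h := (hmemS u).mp hu i
    exact ⟨Real.rpow_nonneg h.1 _,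
      Real.rpow_le_one h.1 h.2 (by have := (hw i).1; positivity)⟩
  -- equivalence of coordinate inequality under rpow
  have hiff : ∀ (i : Fin d) (t : ℝ), 0 < t → ∀ x : ℝ, 0 ≤ x →
      (x ^ (1 / w i) ≤ t ↔ x ≤ t ^ w i) := by
    intro i t ht x hx
    rw [one_div, Real.rpow_inv_le_iff_of_pos hx ht.le (hw i).1]
  -- the max
  set M : (Fin d → ℝ) → ℝ := fun u => Finset.univ.sup' hne fun i => f i u with hMdef
  have hMmeas : Measurable M := by
    have h := Finset.measurable_sup' hne fun i (_ : i ∈ Finset.univ) => hfmeas i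
    have hMe : M = Finset.univ.sup' hne f := by
      funext u
      rw [hMdef]
      exact (Finset.sup'_apply hne f u).symm
    rw [hMe]
    exact h
  have hM01 : ∀ u ∈ S, M u ∈ Set.Icc (0:ℝ) 1 := by
    intro u hu
    constructor
    · obtain ⟨i, hi⟩ := hne
      exact le_trans (hf01 i u hu).1 (Finset.le_sup' (fun i => f i u) hi)
    · exact Finset.sup'_le hne _ fun i _ => (hf01 i u hu).2
  -- CDF of M
  have hMcdf : ∀ t ∈ Set.Ioo (0:ℝ) 1, (μ {u | M u ≤ t}).toReal = t ^ a := by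
    intro t ht
    have hμeq : μ {u | M u ≤ t} = μ {v | ∀ i, v i ≤ t ^ w i} := by
      refine measure_eq_of_inter_eq μ hμ ?_
      ext u
      simp only [Set.mem_inter_iff, Set.mem_setOf_eq, and_congr_left_iff]
      intro hu
      rw [hMdef]
      simp only [Finset.sup'_le_iff, Finset.mem_univ, true_implies]
      constructor
      · intro h i
        exact (hiff i t ht.1 (u i) ((hmemS u).mp hu i).1).mp (h i)
      · intro h i
        exact (hiff i t ht.1 (u i) ((hmemS u).mp hu i).1).mpr (h i)
    have := hdiag t ht
    rw [cdf] at this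
    rw [hμeq, this]
  -- CDF of each coordinate power
  have hfcdf : ∀ i, ∀ t ∈ Set.Ioo (0:ℝ) 1, (μ {u | f i u ≤ t}).toReal = t ^ w i := by
    intro i t ht
    have htw : t ^ w i ∈ Set.Icc (0:ℝ) 1 :=
      ⟨Real.rpow_nonneg ht.1.le _, Real.rpow_le_one ht.1.le ht.2.le (hw i).1.le⟩
    have hμeq : μ {u | f i u ≤ t}
        = μ {v | ∀ j, v j ≤ Function.update (fun _ => (1:ℝ)) i (t ^ w i) j} := by
      refine measure_eq_of_inter_eq μ hμ ?_
      ext u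
      simp only [Set.mem_inter_iff, Set.mem_setOf_eq, and_congr_left_iff]
      intro hu
      constructor
      · intro h j
        rw [Function.update_apply]
        by_cases hj : j = i
        · subst hj
          simp only [if_pos rfl]
          exact (hiff j t ht.1 (u j) ((hmemS u).mp hu j).1).mp h
        · simp only [if_neg hj]
          exact ((hmemS u).mp hu j).2
      · intro h
        have hi := h i
        rw [Function.update_apply, if_pos rfl] at hi
        exact (hiff i t ht.1 (u i) ((hmemS u).mp hu i).1).mpr hi
    have := hmarg i (t ^ w i) htw
    rw [cdf] at this
    rw [hμeq, this]
  -- integrals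
  have hintM : ∫ u, M u ∂μ = a / (1 + a) :=
    integral_eq_of_cdf_rpow μ hμ hMmeas hM01 ha hMcdf
  have hintf : ∀ i, ∫ u, f i u ∂μ = w i / (1 + w i) := fun i =>
    integral_eq_of_cdf_rpow μ hμ (hfmeas i) (hf01 i) (hw i).1 (hfcdf i)
  -- integrability
  have hintgM : Integrable M μ := integrable_of_bounded01 μ hμ hMmeas hM01
  have hintgf : ∀ i, Integrable (f i) μ := fun i =>
    integrable_of_bounded01 μ hμ (hfmeas i) (hf01 i)
  -- compute ν
  have hν' : ν = a / (1 + a) - (1 / (d:ℝ)) * ∑ i, w i / (1 + w i) := by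
    have hnuW : ∀ u, nuW d hd0 w u = M u - (1 / (d:ℝ)) * ∑ i, f i u := by
      intro u; rfl
    rw [hν]
    calc ∫ u, nuW d (by omega : 0 < d) w u ∂μ
        = ∫ u, (M u - (1 / (d:ℝ)) * ∑ i, f i u) ∂μ := by
          refine integral_congr_ae (Filter.Eventually.of_forall fun u => ?_)
          exact hnuW u
      _ = (∫ u, M u ∂μ) - ∫ u, (1 / (d:ℝ)) * ∑ i, f i u ∂μ := by
          refine integral_sub hintgM ?_
          exact ((integrable_finset_sum Finset.univ fun i _ => hintgf i).const_mul _)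
      _ = (∫ u, M u ∂μ) - (1 / (d:ℝ)) * ∑ i, ∫ u, f i u ∂μ := by
          rw [integral_const_mul, integral_finset_sum Finset.univ fun i _ => hintgf i]
      _ = a / (1 + a) - (1 / (d:ℝ)) * ∑ i, w i / (1 + w i) := by
          rw [hintM]
          congr 1
          congr 1
          exact Finset.sum_congr rfl fun i _ => hintf i
  have h1a : (0:ℝ) < 1 + a := by linarith
  have hkey : ν + (1 / (d:ℝ)) * ∑ i, w i / (1 + w i) = a / (1 + a) := by
    rw [hν']; ring
  constructor
  · rw [hkey]
    exact (div_lt_one h1a).mpr (by linarith)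
  · have h2 : 1 - ν - (1 / (d:ℝ)) * ∑ i, w i / (1 + w i)
        = 1 - (ν + (1 / (d:ℝ)) * ∑ i, w i / (1 + w i)) := by ring
    rw [h2, hkey]
    have h3 : 1 - a / (1 + a) = 1 / (1 + a) := by field_simp; ring
    rw [h3]
    field_simp
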